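/- The first Brocard point H+ lies on each of the three tangent circles: dist aB H+ = dist aB B, dist bC H+ = dist bC C, and dist cA H+ = dist cA A. That is, H+ lies on the circle through A and B tangent to BC at B, on the circle through B and C tangent to CA at C, and on the circle through C and A tangent to AB at A. -/

import Mathlib

open EuclideanGeometry RealInnerProductSpace

private lemma inner_of_dist_eq {E : Type*} [NormedAddCommGroup E] [InnerProductSpace ℝ E]
    (P X Y : E) (h : dist P X = dist P Y) :
    ⟪P - Y, X - Y⟫ = ⟪X - Y, X - Y⟫ / 2 := by
  have h2 : ‖(P - Y) - (X - Y)‖ ^ 2 = ‖P - Y‖ ^ 2 := by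
    rw [show (P - Y) - (X - Y) = P - X by abel, ← dist_eq_norm, ← dist_eq_norm, h]
  set p := P - Y with hp
  set q := X - Y with hq
  rw [← real_inner_self_eq_norm_sq, ← real_inner_self_eq_norm_sq] at h2
  simp only [inner_sub_left, inner_sub_right] at h2
  have hc := real_inner_comm p q
  linarith

private lemma law_lemma {E : Type*} [NormedAddCommGroup E] [InnerProductSpace ℝ E]
    (u v : E) : ⟪u, v⟫ = (⟪u, u⟫ + ⟪v, v⟫ - ⟪u - v, u - v⟫) / 2 := by
  have hc := real_inner_comm u v
  simp only [inner_sub_left, inner_sub_right]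
  linarith

private lemma key {E : Type*} [NormedAddCommGroup E] [InnerProductSpace ℝ E]
    (u v w : E) (a b c : ℝ) (hs0 : a^2*b^2 + b^2*c^2 + c^2*a^2 ≠ 0)
    (h1 : ⟪u, u⟫ = c^2) (h2 : ⟪v, v⟫ = a^2)
    (h3 : ⟪u, v⟫ = (c^2 + a^2 - b^2)/2)
    (h4 : ⟪w, u⟫ = c^2/2) (h5 : ⟪w, v⟫ = 0) :
    ‖w - (a^2*b^2 + b^2*c^2 + c^2*a^2)⁻¹ • ((a^2*c^2) • u + (b^2*c^2) • v)‖ = ‖w‖ := by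
  rw [← Real.sqrt_sq (norm_nonneg (w - _)), ← Real.sqrt_sq (norm_nonneg w)]
  congr 1
  rw [← real_inner_self_eq_norm_sq, ← real_inner_self_eq_norm_sq]
  simp only [inner_sub_left, inner_sub_right, inner_add_left, inner_add_right,
    real_inner_smul_left, real_inner_smul_right]
  rw [real_inner_comm u v, real_inner_comm w u, real_inner_comm w v]
  rw [h1, h2, h3, h4, h5]
  have hs : (a^2*b^2 + b^2*c^2 + c^2*a^2)⁻¹ * (a^2*b^2 + b^2*c^2 + c^2*a^2) = 1 :=
    inv_mul_cancel₀ hs0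
  linear_combination ((a^2*b^2 + b^2*c^2 + c^2*a^2)⁻¹ * a^2 * c^4) * hs

theorem first_brocard_on_tangent_circles
    (A B C aB bC cA Hp : EuclideanSpace ℝ (Fin 2))
    (hABC : AffineIndependent ℝ ![A, B, C])
    (a b c : ℝ) (ha : a = dist B C) (hb : b = dist C A) (hc : c = dist A B)
    (hHp : Hp = (a^2*b^2 + b^2*c^2 + c^2*a^2)⁻¹ •
      ((a^2*c^2) • A + (a^2*b^2) • B + (b^2*c^2) • C))
    (haB1 : dist aB A = dist aB B) (haB2 : ⟪aB - B, C - B⟫ = 0)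
    (hbC1 : dist bC B = dist bC C) (hbC2 : ⟪bC - C, A - C⟫ = 0)
    (hcA1 : dist cA C = dist cA A) (hcA2 : ⟪cA - A, B - A⟫ = 0) :
    dist aB Hp = dist aB B ∧ dist bC Hp = dist bC C ∧ dist cA Hp = dist cA A := by
  -- distinctness and positivity
  have hAB : A ≠ B := by
    have := hABC.injective.ne (show (0 : Fin 3) ≠ 1 by decide)
    simpa using this
  have hBC : B ≠ C := by
    have := hABC.injective.ne (show (1 : Fin 3) ≠ 2 by decide)
    simpa using this
  have hCA : C ≠ A := by
    have := hABC.injective.ne (show (2 : Fin 3) ≠ 0 by decide)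
    simpa using this
  have hapos : 0 < a := ha ▸ dist_pos.2 hBC
  have hbpos : 0 < b := hb ▸ dist_pos.2 hCA
  have hcpos : 0 < c := hc ▸ dist_pos.2 hAB
  have hs0 : a^2*b^2 + b^2*c^2 + c^2*a^2 ≠ 0 := by positivity
  -- side length inner products
  have hiAB : ⟪A - B, A - B⟫ = c^2 := by
    rw [real_inner_self_eq_norm_sq, ← dist_eq_norm, hc]
  have hiCB : ⟪C - B, C - B⟫ = a^2 := by
    rw [real_inner_self_eq_norm_sq, ← dist_eq_norm, dist_comm, ha]
  have hiAC : ⟪A - C, A - C⟫ = b^2 := by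
    rw [real_inner_self_eq_norm_sq, ← dist_eq_norm, dist_comm, hb]
  have hiBA : ⟪B - A, B - A⟫ = c^2 := by
    rw [real_inner_self_eq_norm_sq, ← dist_eq_norm, dist_comm, hc]
  have hiBC : ⟪B - C, B - C⟫ = a^2 := by
    rw [real_inner_self_eq_norm_sq, ← dist_eq_norm, ha]
  have hiCA : ⟪C - A, C - A⟫ = b^2 := by
    rw [real_inner_self_eq_norm_sq, ← dist_eq_norm, hb]
  -- law of cosines style mixed inner products
  have lawB : ⟪A - B, C - B⟫ = (c^2 + a^2 - b^2)/2 := by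
    have h0 := law_lemma (A - B) (C - B)
    rw [show (A - B) - (C - B) = A - C by abel, hiAB, hiCB, hiAC] at h0
    linarith
  have lawC : ⟪B - C, A - C⟫ = (a^2 + b^2 - c^2)/2 := by
    have h0 := law_lemma (B - C) (A - C)
    rw [show (B - C) - (A - C) = B - A by abel, hiBC, hiAC, hiBA] at h0
    linarith
  have lawA : ⟪C - A, B - A⟫ = (b^2 + c^2 - a^2)/2 := by
    have h0 := law_lemma (C - A) (B - A)
    rw [show (C - A) - (B - A) = C - B by abel, hiCA, hiBA, hiCB] at h0
    linarith
  -- inner products from the equidistance hypotheses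
  have haB3 : ⟪aB - B, A - B⟫ = c^2/2 := by
    have := inner_of_dist_eq aB A B haB1
    rw [hiAB] at this; linarith
  have hbC3 : ⟪bC - C, B - C⟫ = a^2/2 := by
    have := inner_of_dist_eq bC B C hbC1
    rw [hiBC] at this; linarith
  have hcA3 : ⟪cA - A, C - A⟫ = b^2/2 := by
    have := inner_of_dist_eq cA C A hcA1
    rw [hiCA] at this; linarith
  -- decompositions of Hp
  have hHB : Hp - B = (a^2*b^2 + b^2*c^2 + c^2*a^2)⁻¹ •
      ((a^2*c^2) • (A - B) + (b^2*c^2) • (C - B)) := by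
    rw [hHp]; match_scalars <;> field_simp <;> ring
  have hHC : Hp - C = (a^2*b^2 + b^2*c^2 + c^2*a^2)⁻¹ •
      ((a^2*b^2) • (B - C) + (a^2*c^2) • (A - C)) := by
    rw [hHp]; match_scalars <;> field_simp <;> ring
  have hHA : Hp - A = (a^2*b^2 + b^2*c^2 + c^2*a^2)⁻¹ •
      ((b^2*c^2) • (C - A) + (a^2*b^2) • (B - A)) := by
    rw [hHp]; match_scalars <;> field_simp <;> ring
  refine ⟨?_, ?_, ?_⟩
  · -- circle through A, B tangent at B
    have e1 : aB - Hp = (aB - B) - (Hp - B) := by abel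
    rw [dist_eq_norm, dist_eq_norm, e1, hHB]
    exact key (A - B) (C - B) (aB - B) a b c hs0 hiAB hiCB lawB haB3 haB2
  · -- circle through B, C tangent at C : substitute (a,b,c) ↦ (b,c,a)
    have e1 : bC - Hp = (bC - C) - (Hp - C) := by abel
    have hs0' : b^2*c^2 + c^2*a^2 + a^2*b^2 ≠ 0 := by positivity
    have hHC' : Hp - C = (b^2*c^2 + c^2*a^2 + a^2*b^2)⁻¹ •
        ((b^2*a^2) • (B - C) + (c^2*a^2) • (A - C)) := by
      rw [hHC]; ring_nf
    rw [dist_eq_norm, dist_eq_norm, e1, hHC']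
    exact key (B - C) (A - C) (bC - C) b c a hs0' hiBC hiAC lawC hbC3 hbC2
  · -- circle through C, A tangent at A : substitute (a,b,c) ↦ (c,a,b)
    have e1 : cA - Hp = (cA - A) - (Hp - A) := by abel
    have hs0' : c^2*a^2 + a^2*b^2 + b^2*c^2 ≠ 0 := by positivity
    have hHA' : Hp - A = (c^2*a^2 + a^2*b^2 + b^2*c^2)⁻¹ •
        ((c^2*b^2) • (C - A) + (a^2*b^2) • (B - A)) := by
      rw [hHA]; ring_nf
    rw [dist_eq_norm, dist_eq_norm, e1, hHA']
    exact key (C - A) (B - A) (cA - A) c a b hs0' hiCA hiBA lawA hcA3 hcA2
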